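/- arXiv:1608.05056 — 6 statements merged into one kernel-verified Lean document; each statement's English description precedes it below -/
import Mathlib

section
/- The ℚ-algebra automorphism σ of K = ℚ(a,b,c,d,e,f) determined by the simultaneous exchanges a↔e, b↔f, c↔d fixes each of the six line coordinates s_1, t_1, s_2, t_2, s_3, t_3 of the Pascal lines ℓ_1, ℓ_2, ℓ_3. -/
noncomputable section

/-- `K = ℚ(a,b,c,d,e,f)`, the field of rational functions in six variables over ℚ. -/
abbrev RatField : Type := FractionRing (MvPolynomial (Fin 6) ℚ)

/-- The six independent variables `a, b, c, d, e, f` (indexed `0,…,5`) as elements of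
`ℚ(a,…,f)`. -/
def var (i : Fin 6) : RatField :=
  algebraMap (MvPolynomial (Fin 6) ℚ) RatField (MvPolynomial.X i)

/-- The point `[1, p, p²]` of the conic `z1² = z0·z2`, in homogeneous coordinates. -/
def conicPt (p : RatField) : Fin 3 → RatField := ![1, p, p ^ 2]

/-- Cross product of coordinate vectors: the coordinates of the join of two points, or of
the intersection of two lines. -/
def cross (u v : Fin 3 → RatField) : Fin 3 → RatField :=
  ![u 1 * v 2 - u 2 * v 1, u 2 * v 0 - u 0 * v 2, u 0 * v 1 - u 1 * v 0]

/-- The homogeneous coordinate vector of the Pascal line of the array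
`[P1 P2 P3; Q1 Q2 Q3]` of points of the conic with parameters `p1, p2, p3, q1, q2, q3`:
the line through the (collinear) points `P1Q2 ∩ P2Q1`, `P2Q3 ∩ P3Q2`, `P1Q3 ∩ P3Q1`,
computed as the join of the first two of them. -/
def pascalVec (p1 p2 p3 q1 q2 q3 : RatField) : Fin 3 → RatField :=
  cross
    (cross (cross (conicPt p1) (conicPt q2)) (cross (conicPt p2) (conicPt q1)))
    (cross (cross (conicPt p2) (conicPt q3)) (cross (conicPt p3) (conicPt q2)))

/-- The coordinate `s` of a line with coordinates `⟨1, s, t⟩`, i.e. the line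
`z0 + s·z1 + t·z2 = 0`. -/
def sCoord (l : Fin 3 → RatField) : RatField := l 1 / l 0

/-- The coordinate `t` of a line with coordinates `⟨1, s, t⟩`, i.e. the line
`z0 + s·z1 + t·z2 = 0`. -/
def tCoord (l : Fin 3 → RatField) : RatField := l 2 / l 0

/-- The Pascal `ℓ₁` of the array `[A D B; E C F]`. -/
def line1 : Fin 3 → RatField := pascalVec (var 0) (var 3) (var 1) (var 4) (var 2) (var 5)

/-- The Pascal `ℓ₂` of the array `[A C F; E D B]`. -/
def line2 : Fin 3 → RatField := pascalVec (var 0) (var 2) (var 5) (var 4) (var 3) (var 1)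

/-- The Pascal `ℓ₃` of the array `[A D F; E C B]`. -/
def line3 : Fin 3 → RatField := pascalVec (var 0) (var 3) (var 5) (var 4) (var 2) (var 1)

/-- The Pascal `ℓ⋆` of the array `[A B C; F D E]`. -/
def lineStar : Fin 3 → RatField :=
  pascalVec (var 0) (var 1) (var 2) (var 5) (var 3) (var 4)

private lemma cross0 (u v : Fin 3 → RatField) : cross u v 0 = u 1 * v 2 - u 2 * v 1 := rfl
private lemma cross1 (u v : Fin 3 → RatField) : cross u v 1 = u 2 * v 0 - u 0 * v 2 := rfl
private lemma cross2 (u v : Fin 3 → RatField) : cross u v 2 = u 0 * v 1 - u 1 * v 0 := rfl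

private lemma pascal_core (P1 P2 P3 Q1 Q2 Q3 : Fin 3 → RatField) :
    cross (cross (cross Q1 P2) (cross Q2 P1)) (cross (cross Q2 P3) (cross Q3 P2)) =
    cross (cross (cross P1 Q2) (cross P2 Q1)) (cross (cross P2 Q3) (cross P3 Q2)) := by
  have h0 : cross (cross (cross Q1 P2) (cross Q2 P1)) (cross (cross Q2 P3) (cross Q3 P2)) 0 =
      cross (cross (cross P1 Q2) (cross P2 Q1)) (cross (cross P2 Q3) (cross P3 Q2)) 0 := by
    simp only [cross0, cross1, cross2]; ring
  have h1 : cross (cross (cross Q1 P2) (cross Q2 P1)) (cross (cross Q2 P3) (cross Q3 P2)) 1 =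
      cross (cross (cross P1 Q2) (cross P2 Q1)) (cross (cross P2 Q3) (cross P3 Q2)) 1 := by
    simp only [cross0, cross1, cross2]; ring
  have h2 : cross (cross (cross Q1 P2) (cross Q2 P1)) (cross (cross Q2 P3) (cross Q3 P2)) 2 =
      cross (cross (cross P1 Q2) (cross P2 Q1)) (cross (cross P2 Q3) (cross P3 Q2)) 2 := by
    simp only [cross0, cross1, cross2]; ring
  funext i; fin_cases i; exacts [h0, h1, h2]

private lemma pascalVec_rowswap (p1 p2 p3 q1 q2 q3 : RatField) :
    pascalVec q1 q2 q3 p1 p2 p3 = pascalVec p1 p2 p3 q1 q2 q3 := by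
  unfold pascalVec
  exact pascal_core (conicPt p1) (conicPt p2) (conicPt p3)
    (conicPt q1) (conicPt q2) (conicPt q3)

private lemma sigma_cross (σ : RatField ≃+* RatField) (u v : Fin 3 → RatField) (i : Fin 3) :
    σ (cross u v i) = cross (fun j => σ (u j)) (fun j => σ (v j)) i := by
  fin_cases i <;> simp [cross]

private lemma sigma_conic (σ : RatField ≃+* RatField) (p : RatField) :
    (fun j => σ (conicPt p j)) = conicPt (σ p) := by
  funext j; fin_cases j <;> simp [conicPt]

private lemma sigma_pascalVec (σ : RatField ≃+* RatField)
    (p1 p2 p3 q1 q2 q3 : RatField) (i : Fin 3) :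
    σ (pascalVec p1 p2 p3 q1 q2 q3 i)
      = pascalVec (σ p1) (σ p2) (σ p3) (σ q1) (σ q2) (σ q3) i := by
  unfold pascalVec
  rw [sigma_cross]
  congr 1 <;> funext j <;> rw [sigma_cross] <;> congr 1 <;> funext k <;>
    rw [sigma_cross] <;> congr 1 <;> rw [sigma_conic]

/-- The (ℚ-algebra) automorphism `σ` of `K = ℚ(a,…,f)` determined by the simultaneous
exchanges `a↔e`, `b↔f`, `c↔d` fixes each of the six line coordinates
`s₁, t₁, s₂, t₂, s₃, t₃` of the Pascal lines `ℓ₁, ℓ₂, ℓ₃`.  (Any ring automorphism of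
`K` is automatically a ℚ-algebra automorphism, and is determined by its values on the
generators `a, …, f`.) -/
theorem pascal_stmt_2 (σ : RatField ≃+* RatField)
    (hae : σ (var 0) = var 4) (hea : σ (var 4) = var 0)
    (hbf : σ (var 1) = var 5) (hfb : σ (var 5) = var 1)
    (hcd : σ (var 2) = var 3) (hdc : σ (var 3) = var 2) :
    σ (sCoord line1) = sCoord line1 ∧ σ (tCoord line1) = tCoord line1 ∧
      σ (sCoord line2) = sCoord line2 ∧ σ (tCoord line2) = tCoord line2 ∧
      σ (sCoord line3) = sCoord line3 ∧ σ (tCoord line3) = tCoord line3 := by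
  have main : ∀ p1 p2 p3 q1 q2 q3 : Fin 6,
      σ (var p1) = var q1 → σ (var p2) = var q2 → σ (var p3) = var q3 →
      σ (var q1) = var p1 → σ (var q2) = var p2 → σ (var q3) = var p3 →
      ∀ i, σ (pascalVec (var p1) (var p2) (var p3) (var q1) (var q2) (var q3) i)
        = pascalVec (var p1) (var p2) (var p3) (var q1) (var q2) (var q3) i := by
    intro p1 p2 p3 q1 q2 q3 h1 h2 h3 h4 h5 h6 i
    rw [sigma_pascalVec, h1, h2, h3, h4, h5, h6, pascalVec_rowswap]
  have key : ∀ l : Fin 3 → RatField,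
      (∀ i, σ (l i) = l i) → σ (sCoord l) = sCoord l ∧ σ (tCoord l) = tCoord l := by
    intro l h
    exact ⟨by simp [sCoord, map_div₀, h], by simp [tCoord, map_div₀, h]⟩
  have h1 := key line1 (main 0 3 1 4 2 5 hae hdc hbf hea hcd hfb)
  have h2 := key line2 (main 0 2 5 4 3 1 hae hcd hfb hea hdc hbf)
  have h3 := key line3 (main 0 3 5 4 2 1 hae hdc hfb hea hcd hbf)
  exact ⟨h1.1, h1.2, h2.1, h2.2, h3.1, h3.2⟩

end
end

section
/- For arbitrary quadratic binary forms U, V, W over a field of characteristic zero, ψ(U,V,W) = 3·[ (U,V)_2·W + (U,W)_2·V − (V,W)_2·U ], where ψ(U,V,W) = 6·(U, V·W)_2 − U·(V,W)_2. -/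
open MvPolynomial

/-- The `r`-th transvectant of binary forms `G`, `H` of degrees `m`, `n`:
`(G,H)_r = ((m−r)!(n−r)!)/(m!·n!) · Σ_{i=0}^{r} (−1)^i·C(r,i)·
  (∂^r G/∂x1^{r−i}∂x2^{i})·(∂^r H/∂x1^{i}∂x2^{r−i})`. -/
noncomputable def transvectant {k : Type*} [Field k] (m n r : ℕ)
    (G H : MvPolynomial (Fin 2) k) : MvPolynomial (Fin 2) k :=
  C ((((m - r).factorial * (n - r).factorial : ℕ) : k) /
      ((m.factorial * n.factorial : ℕ) : k)) *
    ∑ i ∈ Finset.range (r + 1),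
      C ((-1 : k) ^ i * (r.choose i : k)) *
        ((fun p => pderiv (0 : Fin 2) p)^[r - i]
            ((fun p => pderiv (1 : Fin 2) p)^[i] G) *
          (fun p => pderiv (0 : Fin 2) p)^[i]
            ((fun p => pderiv (1 : Fin 2) p)^[r - i] H))

/-- An explicit quadratic binary form. -/
noncomputable def quadf {k : Type*} [Field k] (a b c : k) : MvPolynomial (Fin 2) k :=
  C a * X 0 ^ 2 + C b * (X 0 * X 1) + C c * X 1 ^ 2

section aux

variable {k : Type*} [Field k]

lemma pderiv_two (j : Fin 2) : pderiv j (2 : MvPolynomial (Fin 2) k) = 0 := by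
  rw [show (2 : MvPolynomial (Fin 2) k) = C 2 from (map_ofNat C 2).symm, pderiv_C]

lemma pd0_quadf (a b c : k) : pderiv (0:Fin 2) (quadf a b c) = C (2*a) * X 0 + C b * X 1 := by
  simp [quadf, pderiv_X_self, pderiv_X_of_ne (by decide : (0:Fin 2) ≠ 1), map_ofNat]
  ring

lemma pd1_quadf (a b c : k) : pderiv (1:Fin 2) (quadf a b c) = C b * X 0 + C (2*c) * X 1 := by
  simp [quadf, pderiv_X_self, pderiv_X_of_ne (by decide : (1:Fin 2) ≠ 0), map_ofNat]
  ring

lemma pd0_lin (p q : k) : pderiv (0:Fin 2) (C p * X 0 + C q * X 1) = C p := by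
  simp [pderiv_X_self, pderiv_X_of_ne (by decide : (0:Fin 2) ≠ 1)]

lemma pd1_lin (p q : k) : pderiv (1:Fin 2) (C p * X 0 + C q * X 1) = C q := by
  simp [pderiv_X_self, pderiv_X_of_ne (by decide : (1:Fin 2) ≠ 0)]

lemma dd00_quadf (a b c : k) : pderiv (0:Fin 2) (pderiv (0:Fin 2) (quadf a b c)) = C (2*a) := by
  rw [pd0_quadf, pd0_lin]
lemma dd01_quadf (a b c : k) : pderiv (0:Fin 2) (pderiv (1:Fin 2) (quadf a b c)) = C b := by
  rw [pd1_quadf, pd0_lin]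
lemma dd11_quadf (a b c : k) : pderiv (1:Fin 2) (pderiv (1:Fin 2) (quadf a b c)) = C (2*c) := by
  rw [pd1_quadf, pd1_lin]

lemma dd00_mul (d e f g h i : k) :
    pderiv (0:Fin 2) (pderiv (0:Fin 2) (quadf d e f * quadf g h i))
      = C (2*d) * quadf g h i
        + C 2 * ((C (2*d) * X 0 + C e * X 1) * (C (2*g) * X 0 + C h * X 1))
        + quadf d e f * C (2*g) := by
  simp [pderiv_mul, map_add, pd0_quadf, pd1_quadf, pderiv_C,
    pderiv_X_self, pderiv_X_of_ne (by decide : (0:Fin 2) ≠ 1),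
    pderiv_X_of_ne (by decide : (1:Fin 2) ≠ 0), map_ofNat, pderiv_two]
  ring

lemma dd01_mul (d e f g h i : k) :
    pderiv (0:Fin 2) (pderiv (1:Fin 2) (quadf d e f * quadf g h i))
      = C e * quadf g h i
        + (C e * X 0 + C (2*f) * X 1) * (C (2*g) * X 0 + C h * X 1)
        + (C (2*d) * X 0 + C e * X 1) * (C h * X 0 + C (2*i) * X 1)
        + quadf d e f * C h := by
  simp [pderiv_mul, map_add, pd0_quadf, pd1_quadf, pderiv_C,
    pderiv_X_self, pderiv_X_of_ne (by decide : (0:Fin 2) ≠ 1),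
    pderiv_X_of_ne (by decide : (1:Fin 2) ≠ 0), map_ofNat, pderiv_two]
  ring

lemma dd11_mul (d e f g h i : k) :
    pderiv (1:Fin 2) (pderiv (1:Fin 2) (quadf d e f * quadf g h i))
      = C (2*f) * quadf g h i
        + C 2 * ((C e * X 0 + C (2*f) * X 1) * (C h * X 0 + C (2*i) * X 1))
        + quadf d e f * C (2*i) := by
  simp [pderiv_mul, map_add, pd0_quadf, pd1_quadf, pderiv_C,
    pderiv_X_self, pderiv_X_of_ne (by decide : (0:Fin 2) ≠ 1),
    pderiv_X_of_ne (by decide : (1:Fin 2) ≠ 0), map_ofNat, pderiv_two]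
  ring

lemma it2aux {M : Type*} (f : M → M) (x : M) : f^[2] x = f (f x) := rfl
lemma it1aux {M : Type*} (f : M → M) (x : M) : f^[1] x = f x := rfl
lemma it0aux {M : Type*} (f : M → M) (x : M) : f^[0] x = x := rfl

lemma quadf_decomp (P : MvPolynomial (Fin 2) k) (hP : P.IsHomogeneous 2) :
    P = quadf (coeff (Finsupp.single 0 2) P)
      (coeff (Finsupp.single 0 1 + Finsupp.single 1 1) P)
      (coeff (Finsupp.single 1 2) P) := by
  rw [quadf]
  have e12 : (Finsupp.single (0:Fin 2) 2) ≠ Finsupp.single 0 1 + Finsupp.single 1 1 := by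
    intro h; have := DFunLike.congr_fun h 1; simp at this
  have e13 : (Finsupp.single (0:Fin 2) 2) ≠ Finsupp.single 1 2 := by
    intro h; have := DFunLike.congr_fun h 1; simp at this
  have e23 : (Finsupp.single (0:Fin 2) 1 + Finsupp.single 1 1) ≠ Finsupp.single 1 2 := by
    intro h; have := DFunLike.congr_fun h 0; simp at this
  ext m
  have hx01 : (X 0 * X 1 : MvPolynomial (Fin 2) k)
      = monomial (Finsupp.single 0 1 + Finsupp.single 1 1) 1 := by
    rw [X, X, monomial_mul, one_mul]
  have hdeg : m.degree = m 0 + m 1 := by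
    rw [Finsupp.degree_eq_weight_one]
    simp [Finsupp.weight_apply, Finsupp.sum_fintype, Fin.sum_univ_two]
  simp only [coeff_add, coeff_C_mul, hx01, coeff_monomial, coeff_X_pow]
  by_cases h2 : m 0 + m 1 = 2
  · have hm : m = Finsupp.single 0 (m 0) + Finsupp.single 1 (m 1) := by
      ext i; fin_cases i <;> simp
    rcases (by omega : m 0 = 0 ∧ m 1 = 2 ∨ m 0 = 1 ∧ m 1 = 1 ∨ m 0 = 2 ∧ m 1 = 0)
      with ⟨h0, h1⟩ | ⟨h0, h1⟩ | ⟨h0, h1⟩ <;> rw [h0, h1] at hm <;>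
      (try simp only [Finsupp.single_zero, zero_add, add_zero] at hm) <;> subst hm <;>
      simp [e12, e13, e23, e12.symm, e13.symm, e23.symm]
  · have hz : coeff m P = 0 := hP.coeff_eq_zero (by omega)
    rw [hz]
    have n1 : ¬ Finsupp.single (0:Fin 2) 2 = m := fun h => h2 (by rw [← h]; simp)
    have n2 : ¬ Finsupp.single (0:Fin 2) 1 + Finsupp.single 1 1 = m := fun h => h2 (by
      rw [← h]; simp)
    have n3 : ¬ Finsupp.single (1:Fin 2) 2 = m := fun h => h2 (by rw [← h]; simp)
    simp [n1, n2, n3]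

lemma t22 [CharZero k] (a b c d e f : k) :
    transvectant 2 2 2 (quadf a b c) (quadf d e f)
      = C ((4:k)⁻¹) * C (4*a*f - 2*b*e + 4*c*d) := by
  rw [transvectant]
  have hc : ((((2 - 2).factorial * (2 - 2).factorial : ℕ) : k) /
      ((Nat.factorial 2 * Nat.factorial 2 : ℕ) : k)) = (4:k)⁻¹ := by
    norm_num [Nat.factorial]
  rw [hc]
  congr 1
  rw [Finset.sum_range_succ, Finset.sum_range_succ, Finset.sum_range_succ,
    Finset.sum_range_zero]
  simp only [show (2:ℕ)-0 = 2 from rfl, show (2:ℕ)-1 = 1 from rfl, Nat.sub_self,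
    it2aux, it1aux, it0aux, pow_zero, pow_one, neg_one_sq, one_mul, Nat.choose_zero_right,
    Nat.choose_one_right, Nat.choose_self, Nat.cast_one, Nat.cast_ofNat, mul_one,
    neg_mul, map_one, map_neg, zero_add,
    pd0_quadf, pd1_quadf, pd0_lin, pd1_lin]
  rw [map_ofNat]
  push_cast [map_mul, map_add, map_sub, map_ofNat]
  ring

end aux

set_option maxHeartbeats 1000000 in
/-- For arbitrary quadratic binary forms `U, V, W` over a field of characteristic zero,
`ψ(U,V,W) = 3·[(U,V)_2·W + (U,W)_2·V − (V,W)_2·U]`, where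
`ψ(U,V,W) = 6·(U,V·W)_2 − U·(V,W)_2`. -/
theorem pascal_stmt_8 {k : Type*} [Field k] [CharZero k]
    (U V W : MvPolynomial (Fin 2) k)
    (hU : U.IsHomogeneous 2) (hV : V.IsHomogeneous 2) (hW : W.IsHomogeneous 2) :
    C (6 : k) * transvectant 2 4 2 U (V * W) - U * transvectant 2 2 2 V W =
      C (3 : k) * (transvectant 2 2 2 U V * W + transvectant 2 2 2 U W * V -
        transvectant 2 2 2 V W * U) := by
  rw [quadf_decomp U hU, quadf_decomp V hV, quadf_decomp W hW]
  set a := coeff (Finsupp.single 0 2) U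
  set b := coeff (Finsupp.single 0 1 + Finsupp.single 1 1) U
  set c := coeff (Finsupp.single 1 2) U
  set d := coeff (Finsupp.single 0 2) V
  set e := coeff (Finsupp.single 0 1 + Finsupp.single 1 1) V
  set f := coeff (Finsupp.single 1 2) V
  set g := coeff (Finsupp.single 0 2) W
  set h := coeff (Finsupp.single 0 1 + Finsupp.single 1 1) W
  set i := coeff (Finsupp.single 1 2) W
  rw [transvectant]
  have hc : ((((2 - 2).factorial * (4 - 2).factorial : ℕ) : k) /
      ((Nat.factorial 2 * Nat.factorial 4 : ℕ) : k)) = (24:k)⁻¹ := by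
    norm_num [Nat.factorial]
  rw [hc]
  rw [Finset.sum_range_succ, Finset.sum_range_succ, Finset.sum_range_succ,
    Finset.sum_range_zero]
  simp only [show (2:ℕ)-0 = 2 from rfl, show (2:ℕ)-1 = 1 from rfl, Nat.sub_self,
    it2aux, it1aux, it0aux, pow_zero, pow_one, neg_one_sq, one_mul, Nat.choose_zero_right,
    Nat.choose_one_right, Nat.choose_self, Nat.cast_one, Nat.cast_ofNat, mul_one,
    neg_mul, map_one, map_neg, zero_add,
    dd00_quadf, dd01_quadf, dd11_quadf, dd00_mul, dd01_mul, dd11_mul, t22]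
  rw [← mul_assoc, show (C (6:k)) * C ((24:k)⁻¹) = C ((4:k)⁻¹) by
    rw [← map_mul]; norm_num]
  simp only [quadf]
  push_cast [map_mul, map_add, map_sub, map_ofNat]
  ring
end

section
/- For arbitrary linear binary forms α_x, β_x, γ_x, δ_x over a field of characteristic zero, (α_x·β_x, γ_x·δ_x)_1 = (1/2)·(αγ)·β_x·δ_x + (1/2)·(βδ)·α_x·γ_x. -/
open MvPolynomial

noncomputable def linForm {k : Type*} [Field k] (u1 u2 : k) : MvPolynomial (Fin 2) k :=
  C u1 * X 0 + C u2 * X 1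

/-- For arbitrary linear binary forms `α_x, β_x, γ_x, δ_x` over a field of characteristic
zero, `(α_x·β_x, γ_x·δ_x)_1 = (1/2)·(αγ)·β_x·δ_x + (1/2)·(βδ)·α_x·γ_x`. -/
theorem pascal_stmt_9 {k : Type*} [Field k] [CharZero k]
    (α1 α2 β1 β2 γ1 γ2 δ1 δ2 : k) :
    transvectant 2 2 1 (linForm α1 α2 * linForm β1 β2) (linForm γ1 γ2 * linForm δ1 δ2) =
      C ((1 / 2) * (α1 * γ2 - α2 * γ1)) * (linForm β1 β2 * linForm δ1 δ2) +
        C ((1 / 2) * (β1 * δ2 - β2 * δ1)) * (linForm α1 α2 * linForm γ1 γ2) := by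
  simp only [transvectant, linForm, Finset.sum_range_succ, Finset.sum_range_zero,
    Function.iterate_one, Function.iterate_zero, id_eq, Nat.sub_self, Nat.sub_zero,
    pow_zero, pow_one, Nat.choose_self, Nat.choose_zero_right, Nat.cast_one,
    map_add, map_mul, pderiv_X_self, pderiv_X_of_ne (by decide : (0:Fin 2) ≠ 1),
    pderiv_X_of_ne (by decide : (1:Fin 2) ≠ 0), pderiv_C, Derivation.leibniz]
  push_cast
  ring_nf
  simp [smul_eq_mul, map_ofNat]
  ring_nf
  rw [show (C (1/2:k) : MvPolynomial (Fin 2) k) = C (1/4) * 2 by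
      rw [show (2:MvPolynomial (Fin 2) k) = C (2:k) from (map_ofNat C 2).symm, ← C_mul]
      norm_num]
  ring
end

section
/- Let a_x, b_x, c_x, d_x, e_x, f_x be six linear binary forms over a field of characteristic zero and set U = (b_x·c_x, d_x·f_x)_1 and V = (a_x·c_x, d_x·e_x)_1. Then (U,V)_2 = (1/4)·(cd)·S, where S = (da)(fc)(eb) − (ce)(bd)(af). -/
open MvPolynomial

set_option maxHeartbeats 4000000 in
/-- For six linear binary forms over a field of characteristic zero, with
`U = (b_x·c_x, d_x·f_x)_1` and `V = (a_x·c_x, d_x·e_x)_1`, one has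
`(U,V)_2 = (1/4)·(cd)·S` where `S = (da)(fc)(eb) − (ce)(bd)(af)`. -/
theorem pascal_stmt_13 {k : Type*} [Field k] [CharZero k]
    (a1 a2 b1 b2 c1 c2 d1 d2 e1 e2 f1 f2 : k) :
    let ax := linForm a1 a2
    let bx := linForm b1 b2
    let cx := linForm c1 c2
    let dx := linForm d1 d2
    let ex := linForm e1 e2
    let fx := linForm f1 f2
    let U := transvectant 2 2 1 (bx * cx) (dx * fx)
    let V := transvectant 2 2 1 (ax * cx) (dx * ex)
    let S := (d1 * a2 - d2 * a1) * (f1 * c2 - f2 * c1) * (e1 * b2 - e2 * b1) -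
      (c1 * e2 - c2 * e1) * (b1 * d2 - b2 * d1) * (a1 * f2 - a2 * f1)
    transvectant 2 2 2 U V = C ((1 / 4) * (c1 * d2 - c2 * d1) * S) := by
  simp only [transvectant, linForm]
  simp only [Finset.sum_range_succ, Finset.sum_range_zero]
  norm_num [Function.iterate_succ, Function.iterate_zero, Function.comp_apply,
    pderiv_mul, pderiv_C, pderiv_X, Pi.single_apply]
  simp only [← C_mul, ← C_add, ← C_neg, ← C_sub]
  congr 1
  ring
end

section
/- For linear binary forms a_x, b_x, c_x, d_x, e_x, f_x over a field of characteristic zero, the following identity holds in the twelve coefficient variables: (cd)·(b_x·f_x, a_x·e_x)_2 + (ae)·(b_x·f_x, c_x·d_x)_2 + (bf)·(c_x·d_x, a_x·e_x)_2 − (1/2)·(ae)(bf)(cd) = (da)(fc)(eb) − (ce)(bd)(af). -/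
open MvPolynomial

lemma tv_aux {k : Type*} [Field k] [CharZero k] (u1 u2 v1 v2 w1 w2 z1 z2 : k) :
    transvectant 2 2 2 (linForm u1 u2 * linForm v1 v2) (linForm w1 w2 * linForm z1 z2)
    = C (u1*v1*w2*z2 - (u1*v2+u2*v1)*(w1*z2+w2*z1)/2 + u2*v2*w1*z1) := by
  simp only [transvectant, linForm, Finset.sum_range_succ, Finset.sum_range_zero,
    Function.iterate_succ, Function.iterate_zero, Function.comp_apply, id_eq]
  simp [pderiv_mul, pderiv_X_self, pderiv_X_of_ne, map_add, map_mul, map_sub, map_ofNat]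
  ring_nf
  rw [show (4:MvPolynomial (Fin 2) k) = C 4 from (map_ofNat C 4).symm,
    show (2:MvPolynomial (Fin 2) k) = C 2 from (map_ofNat C 2).symm]
  simp only [← C_mul, ← C_add, ← C_sub, ← C_neg]
  rw [C_inj]
  ring

/-- For six linear binary forms over a field of characteristic zero,
`(cd)·(b_x·f_x, a_x·e_x)_2 + (ae)·(b_x·f_x, c_x·d_x)_2 + (bf)·(c_x·d_x, a_x·e_x)_2
  − (1/2)·(ae)(bf)(cd) = (da)(fc)(eb) − (ce)(bd)(af)`. -/
theorem pascal_stmt_14 {k : Type*} [Field k] [CharZero k]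
    (a1 a2 b1 b2 c1 c2 d1 d2 e1 e2 f1 f2 : k) :
    let ax := linForm a1 a2
    let bx := linForm b1 b2
    let cx := linForm c1 c2
    let dx := linForm d1 d2
    let ex := linForm e1 e2
    let fx := linForm f1 f2
    C (c1 * d2 - c2 * d1) * transvectant 2 2 2 (bx * fx) (ax * ex) +
        C (a1 * e2 - a2 * e1) * transvectant 2 2 2 (bx * fx) (cx * dx) +
        C (b1 * f2 - b2 * f1) * transvectant 2 2 2 (cx * dx) (ax * ex) -
        C ((1 / 2) * (a1 * e2 - a2 * e1) * (b1 * f2 - b2 * f1) * (c1 * d2 - c2 * d1)) =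
      C ((d1 * a2 - d2 * a1) * (f1 * c2 - f2 * c1) * (e1 * b2 - e2 * b1) -
        (c1 * e2 - c2 * e1) * (b1 * d2 - b2 * d1) * (a1 * f2 - a2 * f1)) := by
  intro ax bx cx dx ex fx
  simp only [ax, bx, cx, dx, ex, fx, tv_aux]
  simp only [← C_mul, ← C_add, ← C_sub]
  rw [C_inj]
  ring
end

section
/- Two nonzero quadratic binary forms G and H over a field of characteristic zero are equal up to a nonzero scalar multiple if and only if their first transvectant (G,H)_1 is identically zero. -/
open MvPolynomial

lemma fin2dec (m : Fin 2 →₀ ℕ) : m = Finsupp.single 0 (m 0) + Finsupp.single 1 (m 1) := by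
  ext i; fin_cases i <;> simp [Finsupp.single_apply]

lemma deg2 (d : Fin 2 →₀ ℕ) : d.degree = d 0 + d 1 := by
  rw [Finsupp.degree_apply, Finset.sum_subset (Finset.subset_univ _)]
  · simp [Fin.sum_univ_two]
  · intro x _ hx; simpa using Finsupp.notMem_support_iff.mp hx

lemma neAB : (Finsupp.single (0:Fin 2) 2) ≠ Finsupp.single 0 1 + Finsupp.single 1 1 :=
  fun h => by simpa [Finsupp.single_apply] using DFunLike.congr_fun h 1
lemma neAC : (Finsupp.single (0:Fin 2) 2) ≠ Finsupp.single 1 2 :=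
  fun h => by simpa [Finsupp.single_apply] using DFunLike.congr_fun h 0
lemma neBC : (Finsupp.single (0:Fin 2) 1 + Finsupp.single 1 1) ≠ Finsupp.single 1 2 :=
  fun h => by simpa [Finsupp.single_apply] using DFunLike.congr_fun h 0

lemma homog2 {k : Type*} [Field k] (P : MvPolynomial (Fin 2) k) (h : P.IsHomogeneous 2) :
    P = C (coeff (Finsupp.single 0 2) P) * X 0 ^ 2
      + C (coeff (Finsupp.single 0 1 + Finsupp.single 1 1) P) * (X 0 * X 1)
      + C (coeff (Finsupp.single 1 2) P) * X 1 ^ 2 := by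
  ext d
  have hX01 : (X 0 * X 1 : MvPolynomial (Fin 2) k)
      = monomial (Finsupp.single 0 1 + Finsupp.single 1 1) 1 := by
    rw [X, X, monomial_mul, one_mul]
  rw [hX01]
  simp only [coeff_add, coeff_C_mul, coeff_X_pow, coeff_monomial, mul_ite, mul_one, mul_zero]
  by_cases h2 : d 0 + d 1 = 2
  · rcases (by omega : d 0 = 0 ∧ d 1 = 2 ∨ d 0 = 1 ∧ d 1 = 1 ∨ d 0 = 2 ∧ d 1 = 0)
      with ⟨h0,h1⟩|⟨h0,h1⟩|⟨h0,h1⟩ <;>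
      rw [fin2dec d, h0, h1] <;>
      simp [neAB, neAC, neBC, Ne.symm neAB, Ne.symm neAC, Ne.symm neBC]
  · have hz := h.coeff_eq_zero (d := d) (by rw [deg2]; exact h2)
    have e1 : Finsupp.single (0:Fin 2) 2 ≠ d := by
      rintro rfl; simp [Finsupp.single_apply] at h2
    have e2 : Finsupp.single (0:Fin 2) 1 + Finsupp.single 1 1 ≠ d := by
      rintro rfl; simp [Finsupp.single_apply] at h2
    have e3 : Finsupp.single (1:Fin 2) 2 ≠ d := by
      rintro rfl; simp [Finsupp.single_apply] at h2
    simp [hz, e1, e2, e3]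

lemma transv_zero_iff {k : Type*} [Field k] [CharZero k] (G H : MvPolynomial (Fin 2) k) :
    transvectant 2 2 1 G H = 0 ↔
      pderiv (0:Fin 2) G * pderiv (1:Fin 2) H - pderiv (1:Fin 2) G * pderiv (0:Fin 2) H = 0 := by
  rw [transvectant, Finset.sum_range_succ, Finset.sum_range_one]
  norm_num [Function.iterate_one]
  constructor <;> intro h <;> linear_combination h

lemma jac_eval {k : Type*} [Field k] (a b c d e f : k) :
    pderiv (0:Fin 2) (C a * X 0 ^ 2 + C b * (X 0 * X 1) + C c * X 1 ^ 2)
      * pderiv (1:Fin 2) (C d * X 0 ^ 2 + C e * (X 0 * X 1) + C f * X 1 ^ 2)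
    - pderiv (1:Fin 2) (C a * X 0 ^ 2 + C b * (X 0 * X 1) + C c * X 1 ^ 2)
      * pderiv (0:Fin 2) (C d * X 0 ^ 2 + C e * (X 0 * X 1) + C f * X 1 ^ 2)
    = C (2*(a*e-b*d)) * X 0 ^ 2 + C (4*(a*f-c*d)) * (X 0 * X 1) + C (2*(b*f-c*e)) * X 1 ^ 2 := by
  simp [pderiv_X, Pi.single_apply, map_ofNat]
  ring

lemma quad_coeffs {k : Type*} [Field k] (a b c : k)
    (h : C a * X 0 ^ 2 + C b * (X 0 * X 1) + C c * (X 1:MvPolynomial (Fin 2) k) ^ 2 = 0) :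
    a = 0 ∧ b = 0 ∧ c = 0 := by
  have hX01 : (X 0 * X 1 : MvPolynomial (Fin 2) k)
      = monomial (Finsupp.single 0 1 + Finsupp.single 1 1) 1 := by
    rw [X, X, monomial_mul, one_mul]
  refine ⟨?_, ?_, ?_⟩
  · have := congrArg (coeff (Finsupp.single 0 2)) h
    simpa [hX01, coeff_X_pow, coeff_monomial, neAB, neAC, neBC,
      Ne.symm neAB, Ne.symm neAC, Ne.symm neBC] using this
  · have := congrArg (coeff (Finsupp.single 0 1 + Finsupp.single 1 1)) h
    simpa [hX01, coeff_X_pow, coeff_monomial, neAB, neAC, neBC,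
      Ne.symm neAB, Ne.symm neAC, Ne.symm neBC] using this
  · have := congrArg (coeff (Finsupp.single 1 2)) h
    simpa [hX01, coeff_X_pow, coeff_monomial, neAB, neAC, neBC,
      Ne.symm neAB, Ne.symm neAC, Ne.symm neBC] using this

lemma scalar_of_rel {k : Type*} [Field k] (a b c d e f : k)
    (h1 : a*e = b*d) (h2 : a*f = c*d) (h3 : b*f = c*e)
    (hG : ¬(a = 0 ∧ b = 0 ∧ c = 0)) (hH : ¬(d = 0 ∧ e = 0 ∧ f = 0)) :
    ∃ lam : k, lam ≠ 0 ∧ d = lam*a ∧ e = lam*b ∧ f = lam*c := by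
  by_cases ha : a = 0
  · by_cases hb : b = 0
    · have hc : c ≠ 0 := by tauto
      have hd : d = 0 := by
        have : c * d = 0 := by rw [← h2, ha]; ring
        rcases mul_eq_zero.mp this with h | h; exact absurd h hc; exact h
      have he : e = 0 := by
        have : c * e = 0 := by rw [← h3, hb]; ring
        rcases mul_eq_zero.mp this with h | h; exact absurd h hc; exact h
      have hf : f ≠ 0 := by tauto
      exact ⟨f / c, div_ne_zero hf hc, by rw [ha, hd]; ring, by rw [hb, he]; ring,
        by field_simp⟩
    · have hd : d = 0 := by
        have : b * d = 0 := by rw [← h1, ha]; ring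
        rcases mul_eq_zero.mp this with h | h; exact absurd h hb; exact h
      have he : e ≠ 0 := by
        intro he; apply hH; refine ⟨hd, he, ?_⟩
        have : b * f = 0 := by rw [h3, he]; ring
        rcases mul_eq_zero.mp this with h | h; exact absurd h hb; exact h
      refine ⟨e / b, div_ne_zero he hb, by rw [ha, hd]; ring, by field_simp, ?_⟩
      field_simp
      linear_combination h3
  · have hd0 : e = (b*d)/a := by field_simp; linear_combination h1
    have hf0 : f = (c*d)/a := by field_simp; linear_combination h2
    have hdne : d ≠ 0 := by
      intro hd; apply hH
      refine ⟨hd, ?_, ?_⟩ <;> simp [hd0, hf0, hd]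
    exact ⟨d / a, div_ne_zero hdne ha, by field_simp, by rw [hd0]; ring, by rw [hf0]; ring⟩

/-- Two nonzero quadratic binary forms `G`, `H` over a field of characteristic zero are
equal up to a nonzero scalar multiple if and only if their first transvectant `(G,H)_1`
is identically zero. -/
theorem pascal_stmt_19 {k : Type*} [Field k] [CharZero k]
    (G H : MvPolynomial (Fin 2) k)
    (hG2 : G.IsHomogeneous 2) (hH2 : H.IsHomogeneous 2)
    (hG : G ≠ 0) (hH : H ≠ 0) :
    (∃ c : k, c ≠ 0 ∧ H = C c * G) ↔ transvectant 2 2 1 G H = 0 := by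
  rw [transv_zero_iff]
  constructor
  · rintro ⟨c, hc, rfl⟩
    simp only [pderiv_C_mul]
    ring
  · intro h
    have hGd := homog2 G hG2
    have hHd := homog2 H hH2
    set a := coeff (Finsupp.single 0 2) G with ha
    set b := coeff (Finsupp.single 0 1 + Finsupp.single 1 1) G with hb
    set c := coeff (Finsupp.single 1 2) G with hc
    set d := coeff (Finsupp.single 0 2) H with hd
    set e := coeff (Finsupp.single 0 1 + Finsupp.single 1 1) H with he
    set f := coeff (Finsupp.single 1 2) H with hf
    rw [hGd, hHd, jac_eval] at h
    obtain ⟨h1, h2, h3⟩ := quad_coeffs _ _ _ h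
    have h1' : a * e = b * d := by linear_combination h1 / 2
    have h2' : a * f = c * d := by linear_combination h2 / 4
    have h3' : b * f = c * e := by linear_combination h3 / 2
    have hGne : ¬(a = 0 ∧ b = 0 ∧ c = 0) := by
      rintro ⟨x, y, z⟩; exact hG (by rw [hGd, x, y, z]; simp)
    have hHne : ¬(d = 0 ∧ e = 0 ∧ f = 0) := by
      rintro ⟨x, y, z⟩; exact hH (by rw [hHd, x, y, z]; simp)
    obtain ⟨lam, hlam, hld, hle, hlf⟩ := scalar_of_rel a b c d e f h1' h2' h3' hGne hHne
    refine ⟨lam, hlam, ?_⟩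
    rw [hHd, hGd, hld, hle, hlf]
    simp only [map_mul]
    ring
end
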